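/- Let φ = (√5 - 1)/2. Then Li_3(φ^2) = (4/5)*ζ(3) - (2/3)*(ln φ)^3 + (2/15)*π^2*ln φ, where Li_3(x) = ∑_{n=1}^∞ x^n/n^3 and ζ(3) = ∑_{n=1}^∞ 1/n^3. -/

import Mathlib

open Real Finset

noncomputable def H (n : ℕ) : ℝ := ∑ k ∈ Finset.range n, 1 / ((k : ℝ) + 1)

noncomputable def H2 (n : ℕ) : ℝ := ∑ k ∈ Finset.range n, 1 / ((k : ℝ) + 1) ^ 2

noncomputable def zeta11 (n : ℕ) : ℝ :=
  ∑ k ∈ Finset.range n, ∑ j ∈ Finset.range k, 1 / (((k : ℝ) + 1) * ((j : ℝ) + 1))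

noncomputable def Li (m : ℕ) (x : ℝ) : ℝ := ∑' n : ℕ, x ^ (n + 1) / ((n : ℝ) + 1) ^ m

noncomputable def Li21 (x : ℝ) : ℝ := ∑' n : ℕ, x ^ (n + 1) * H n / ((n : ℝ) + 1) ^ 2

noncomputable def Li31 (x : ℝ) : ℝ := ∑' n : ℕ, x ^ (n + 1) * H n / ((n : ℝ) + 1) ^ 3

noncomputable def zeta3 : ℝ := ∑' n : ℕ, 1 / ((n : ℝ) + 1) ^ 3

noncomputable def zeta31 : ℝ := ∑' n : ℕ, H n / ((n : ℝ) + 1) ^ 3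

open Filter Set Topology


lemma summable_sq : Summable (fun n : ℕ => 1 / ((n : ℝ) + 1) ^ 2) := by
  have h := (summable_nat_add_iff (f := fun n : ℕ => 1 / (n : ℝ) ^ 2) 1).mpr
    (Real.summable_one_div_nat_pow.mpr one_lt_two)
  simpa using h

lemma summable_li {x : ℝ} (hx : |x| ≤ 1) {m : ℕ} (hm : 2 ≤ m) :
    Summable (fun n : ℕ => x ^ (n + 1) / ((n : ℝ) + 1) ^ m) := by
  apply Summable.of_abs
  apply summable_sq.of_nonneg_of_le (fun n => abs_nonneg _)
  intro n
  have hn1 : (1:ℝ) ≤ (n : ℝ) + 1 := by have := Nat.cast_nonneg (α:=ℝ) n; linarith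
  have habs : |(n:ℝ)+1| = (n:ℝ)+1 := abs_of_nonneg (by positivity)
  rw [abs_div, abs_pow, abs_pow, habs]
  apply div_le_div₀ (by norm_num)
  · calc |x| ^ (n+1) ≤ 1 ^ (n+1) := pow_le_pow_left₀ (abs_nonneg x) hx _
      _ = 1 := one_pow _
  · positivity
  · exact pow_le_pow_right₀ hn1 hm

lemma Li_zero (m : ℕ) : Li m 0 = 0 := by
  simp [Li]

lemma Li_one_3 : Li 3 1 = ∑' n : ℕ, 1 / ((n : ℝ) + 1) ^ 3 := by
  unfold Li; exact tsum_congr fun n => by rw [one_pow]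

lemma Li_two_one : Li 2 1 = π ^ 2 / 6 := by
  have h := hasSum_zeta_two
  have h2 : HasSum (fun n : ℕ => (1:ℝ) / ((n:ℝ)+1) ^ 2) (π ^ 2 / 6) := by
    have := (hasSum_nat_add_iff' (f := fun n : ℕ => (1:ℝ) / (n : ℝ) ^ 2) 1).mpr h
    simpa using this
  unfold Li
  rw [← h2.tsum_eq]
  exact tsum_congr fun n => by rw [one_pow]

lemma hasDerivAt_Li {m : ℕ} (hm : 1 ≤ m) {x : ℝ} (hx : |x| < 1) :
    HasDerivAt (Li (m+1)) (∑' n : ℕ, x ^ n / ((n : ℝ) + 1) ^ m) x := by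
  set r : ℝ := (|x| + 1) / 2 with hrdef
  have hx0 := abs_nonneg x
  have hr0 : 0 < r := by rw [hrdef]; linarith
  have hxr : |x| < r := by rw [hrdef]; linarith
  have hr1 : r < 1 := by rw [hrdef]; linarith
  have hu : Summable (fun n : ℕ => r ^ n) := summable_geometric_of_lt_one hr0.le hr1
  have h0mem : (0:ℝ) ∈ Ioo (-r) r := by constructor <;> linarith
  have hxmem : x ∈ Ioo (-r) r := by
    rcases abs_lt.mp hxr with ⟨h1, h2⟩; exact ⟨h1, h2⟩
  have key := hasDerivAt_tsum_of_isPreconnected hu (isOpen_Ioo (a := -r) (b := r))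
      isPreconnected_Ioo
      (g := fun (n : ℕ) (y : ℝ) => y ^ (n + 1) / ((n : ℝ) + 1) ^ (m+1))
      (g' := fun (n : ℕ) (y : ℝ) => y ^ n / ((n : ℝ) + 1) ^ m)
      (fun n y _ => by
        have h1 := hasDerivAt_pow (n+1) y
        have h2 := h1.div_const (((n:ℝ)+1) ^ (m+1))
        refine h2.congr_deriv ?_
        have hne : ((n:ℝ)+1) ≠ 0 := by positivity
        push_cast
        rw [pow_succ]
        field_simp)
      (fun n y hy => by
        have hyr : |y| ≤ r := le_of_lt (abs_lt.mpr ⟨hy.1, hy.2⟩)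
        have h1 : (1:ℝ) ≤ ((n:ℝ)+1) ^ m := one_le_pow₀ (by have := Nat.cast_nonneg (α:=ℝ) n; linarith)
        calc ‖y ^ n / ((n : ℝ) + 1) ^ m‖ = |y| ^ n / ((n:ℝ)+1) ^ m := by
              rw [norm_eq_abs, abs_div, abs_pow, abs_of_nonneg (by positivity : (0:ℝ) ≤ ((n:ℝ)+1)^m)]
          _ ≤ |y| ^ n := div_le_self (by positivity) h1
          _ ≤ r ^ n := pow_le_pow_left₀ (abs_nonneg y) hyr n)
      h0mem
      (by
        apply summable_zero.congr
        intro n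
        simp)
      hxmem
  exact key

lemma hasSum_li1_div {x : ℝ} (hx0 : x ≠ 0) (hx : |x| < 1) :
    HasSum (fun n : ℕ => x ^ n / ((n : ℝ) + 1)) (-Real.log (1 - x) / x) := by
  have h := Real.hasSum_pow_div_log_of_abs_lt_one hx
  have h2 := h.div_const x
  have he : (fun n : ℕ => x ^ (n+1) / ((n:ℝ)+1) / x) = fun n : ℕ => x ^ n / ((n:ℝ)+1) := by
    funext n
    rw [pow_succ]
    field_simp
  rwa [he] at h2

lemma hasDerivAt_Li2 {x : ℝ} (hx0 : x ≠ 0) (hx : |x| < 1) :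
    HasDerivAt (Li 2) (-Real.log (1 - x) / x) x := by
  have h := hasDerivAt_Li (m := 1) le_rfl hx
  have he : (∑' n : ℕ, x ^ n / ((n : ℝ) + 1) ^ 1) = -Real.log (1 - x) / x := by
    rw [← (hasSum_li1_div hx0 hx).tsum_eq]
    exact tsum_congr fun n => by rw [pow_one]
  rwa [he] at h

lemma hasDerivAt_Li3 {x : ℝ} (hx0 : x ≠ 0) (hx : |x| < 1) :
    HasDerivAt (Li 3) (Li 2 x / x) x := by
  have h := hasDerivAt_Li (m := 2) (by norm_num) hx
  have hs : HasSum (fun n : ℕ => x ^ (n+1) / ((n : ℝ) + 1) ^ 2) (Li 2 x) :=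
    (summable_li hx.le le_rfl).hasSum
  have h2 := hs.div_const x
  have he : (fun n : ℕ => x ^ (n+1) / ((n:ℝ)+1) ^ 2 / x) = fun n : ℕ => x ^ n / ((n:ℝ)+1) ^ 2 := by
    funext n
    rw [pow_succ]
    field_simp
  rw [he] at h2
  rwa [h2.tsum_eq] at h

lemma continuousOn_Li {m : ℕ} (hm : 2 ≤ m) :
    ContinuousOn (Li m) (Icc (-1:ℝ) 1) := by
  apply continuousOn_tsum (u := fun n : ℕ => 1 / ((n:ℝ)+1) ^ 2)
    (fun n => ((continuous_pow (n+1)).div_const _).continuousOn) summable_sq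
  intro n y hy
  have hy1 : |y| ≤ 1 := abs_le.mpr ⟨hy.1, hy.2⟩
  have hn1 : (1:ℝ) ≤ (n : ℝ) + 1 := by have := Nat.cast_nonneg (α:=ℝ) n; linarith
  rw [norm_eq_abs, abs_div, abs_pow, abs_pow,
    abs_of_nonneg (by positivity : (0:ℝ) ≤ (n:ℝ)+1)]
  apply div_le_div₀ (by norm_num)
  · calc |y| ^ (n+1) ≤ 1 ^ (n+1) := pow_le_pow_left₀ (abs_nonneg y) hy1 _
      _ = 1 := one_pow _
  · positivity
  · exact pow_le_pow_right₀ hn1 hm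

lemma tendsto_log_mul_log : Tendsto (fun x : ℝ => Real.log x * Real.log (1 - x)) (𝓝[<] (1:ℝ)) (𝓝 0) := by
  have h1 : Tendsto (fun x : ℝ => Real.log x / (x - 1)) (𝓝[<] (1:ℝ)) (𝓝 1) := by
    have hd : HasDerivAt Real.log 1 1 := by simpa using Real.hasDerivAt_log one_ne_zero
    have := hasDerivAt_iff_tendsto_slope.mp hd
    have h2 : Tendsto (slope Real.log 1) (𝓝[<] (1:ℝ)) (𝓝 1) :=
      this.mono_left (nhdsWithin_mono _ (fun y hy => ne_of_lt hy))
    apply h2.congr'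
    filter_upwards [self_mem_nhdsWithin] with y hy
    simp only [Set.mem_Iio] at hy
    have hne : y - 1 ≠ 0 := by intro h; apply absurd hy; simp; linarith
    rw [slope_def_field, Real.log_one, div_eq_div_iff hne hne]
    ring
  have h2 : Tendsto (fun x : ℝ => (x - 1) * Real.log (1 - x)) (𝓝[<] (1:ℝ)) (𝓝 0) := by
    have hcomp : Tendsto (fun x : ℝ => 1 - x) (𝓝[<] (1:ℝ)) (𝓝[>] (0:ℝ)) := by
      apply tendsto_nhdsWithin_of_tendsto_nhds_of_eventually_within
      · have : Tendsto (fun x : ℝ => 1 - x) (𝓝 (1:ℝ)) (𝓝 0) := by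
          have hc : Continuous (fun x : ℝ => 1 - x) := continuous_const.sub continuous_id
          have := hc.tendsto (1:ℝ)
          simpa using this
        exact this.mono_left nhdsWithin_le_nhds
      · filter_upwards [self_mem_nhdsWithin] with y hy
        simp only [Set.mem_Iio] at hy
        simp [Set.mem_Ioi]; linarith
    have hlim : Tendsto (fun u : ℝ => Real.log u * u) (𝓝[>] (0:ℝ)) (𝓝 0) := by
      have := tendsto_log_mul_rpow_nhdsGT_zero (r := 1) one_pos
      simpa using this
    have := hlim.comp hcomp
    have heq : (fun x : ℝ => (x - 1) * Real.log (1 - x)) =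
        fun x => -((fun u : ℝ => Real.log u * u) ((fun x : ℝ => 1 - x) x)) := by
      funext x; simp; ring
    rw [heq]
    simpa using this.neg
  have hmul := h1.mul h2
  rw [one_mul] at hmul
  apply hmul.congr'
  filter_upwards [self_mem_nhdsWithin] with y hy
  simp only [Set.mem_Iio] at hy
  have : y - 1 ≠ 0 := by linarith
  field_simp

lemma tendsto_log_sq_mul_log :
    Tendsto (fun x : ℝ => Real.log x ^ 2 * Real.log (1 - x)) (𝓝[<] (1:ℝ)) (𝓝 0) := by
  have hl : Tendsto (fun x : ℝ => Real.log x) (𝓝[<] (1:ℝ)) (𝓝 0) := by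
    have := (Real.continuousAt_log one_ne_zero).tendsto
    rw [Real.log_one] at this
    exact this.mono_left nhdsWithin_le_nhds
  have h := hl.mul tendsto_log_mul_log
  rw [mul_zero] at h
  apply h.congr
  intro y
  ring

lemma continuousOn_log_mul_log {x : ℝ} (hx0 : 0 < x) (k : ℕ) :
    ContinuousOn (fun y : ℝ => Real.log y ^ (k+1) * Real.log (1 - y)) (Icc x 1) := by
  intro y hy
  rcases eq_or_lt_of_le hy.2 with h1 | h1
  · -- y = 1
    subst h1
    have hlim : Tendsto (fun z : ℝ => Real.log z ^ (k+1) * Real.log (1 - z)) (𝓝[<] (1:ℝ)) (𝓝 0) := by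
      have hl : Tendsto (fun z : ℝ => Real.log z ^ k) (𝓝[<] (1:ℝ)) (𝓝 (0 ^ k * 1)) := by
        have hc : Tendsto (fun z : ℝ => Real.log z) (𝓝[<] (1:ℝ)) (𝓝 0) := by
          have := (Real.continuousAt_log one_ne_zero).tendsto
          rw [Real.log_one] at this
          exact this.mono_left nhdsWithin_le_nhds
        rcases Nat.eq_zero_or_pos k with hk | hk
        · subst hk; simpa using tendsto_const_nhds
        · have := hc.pow k
          rw [zero_pow (by omega)] at this ⊢
          simpa using this
      have h := hl.mul tendsto_log_mul_log
      rw [mul_zero] at h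
      apply h.congr
      intro z
      ring
    rw [← continuousWithinAt_diff_self]
    unfold ContinuousWithinAt
    have hval : (fun y : ℝ => Real.log y ^ (k+1) * Real.log (1 - y)) 1 = 0 := by simp
    rw [hval]
    exact hlim.mono_left (nhdsWithin_mono _ (fun z hz => lt_of_le_of_ne hz.1.2 hz.2))
  · -- y < 1
    have hy0 : 0 < y := lt_of_lt_of_le hx0 hy.1
    apply ContinuousWithinAt.mul
    · exact ((Real.continuousAt_log (ne_of_gt hy0)).pow _).continuousWithinAt
    · exact ((Real.continuousAt_log (by intro h; rw [Pi.sub_apply, sub_eq_zero] at h; exact absurd h.symm (ne_of_lt h1))).comp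
        ((continuous_const.sub continuous_id).continuousAt)).continuousWithinAt

lemma li2_cont_aux {x : ℝ} (hx0 : 0 < x) (hx1 : x < 1) :
    ContinuousOn (fun y : ℝ => Li 2 y + Li 2 (1 - y)) (Icc x 1) := by
  apply ContinuousOn.add
  · exact (continuousOn_Li le_rfl).mono (Icc_subset_Icc (by linarith) le_rfl)
  · apply (continuousOn_Li le_rfl).comp ((continuous_const.sub continuous_id).continuousOn)
    intro y hy
    simp only [Set.mem_Icc] at hy ⊢
    simp only [Pi.sub_apply, id]
    constructor <;> linarith [hy.1, hy.2]

lemma li2_reflection {x : ℝ} (hx : x ∈ Ioo (0:ℝ) 1) :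
    Li 2 x + Li 2 (1 - x) + Real.log x * Real.log (1 - x) = π ^ 2 / 6 := by
  obtain ⟨hx0, hx1⟩ := hx
  have key := constant_of_has_deriv_right_zero
    (f := fun y : ℝ => Li 2 y + Li 2 (1 - y) + Real.log y * Real.log (1 - y)) (a := x) (b := 1)
    ?_ ?_ 1 (by constructor <;> linarith)
  · have h1 : Li 2 1 + Li 2 (1 - 1) + Real.log 1 * Real.log (1 - 1) = π ^ 2 / 6 := by
      rw [Li_two_one]; simp [Li_zero]
    rw [h1] at key
    linarith [key]
  · -- continuity
    apply (li2_cont_aux hx0 hx1).add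
    have := continuousOn_log_mul_log hx0 0
    simpa using this
  · -- derivative zero
    intro y hy
    obtain ⟨hy1, hy2⟩ := hy
    have hy0 : 0 < y := lt_of_lt_of_le hx0 hy1
    have hyabs : |y| < 1 := by rw [abs_of_pos hy0]; exact hy2
    have h1y0 : 0 < 1 - y := by linarith
    have h1yabs : |1 - y| < 1 := by rw [abs_of_pos h1y0]; linarith
    have h1 : HasDerivAt (Li 2) (-Real.log (1 - y) / y) y := hasDerivAt_Li2 (ne_of_gt hy0) hyabs
    have hin : HasDerivAt (fun z : ℝ => 1 - z) (-1) y := by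
      simpa using (hasDerivAt_id y).const_sub 1
    have h2 : HasDerivAt (fun z : ℝ => Li 2 (1 - z))
        ((-Real.log (1 - (1 - y)) / (1 - y)) * (-1)) y :=
      (hasDerivAt_Li2 (ne_of_gt h1y0) h1yabs).comp y hin
    rw [show (1 : ℝ) - (1 - y) = y by ring] at h2
    have hlog1 : HasDerivAt Real.log y⁻¹ y := Real.hasDerivAt_log (ne_of_gt hy0)
    have hlog2 : HasDerivAt (fun z : ℝ => Real.log (1 - z)) ((1 - y)⁻¹ * (-1)) y :=
      (Real.hasDerivAt_log (ne_of_gt h1y0)).comp y hin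
    have hmul := hlog1.mul hlog2
    have htot := (h1.add h2).add hmul
    have heq : -Real.log (1 - y) / y + -Real.log y / (1 - y) * (-1) +
        (y⁻¹ * Real.log (1 - y) + Real.log y * ((1 - y)⁻¹ * (-1))) = 0 := by
      field_simp
      ring
    rw [heq] at htot
    exact htot.hasDerivWithinAt

lemma li2_landen {x : ℝ} (hx : x ∈ Ioo (1/2:ℝ) 1) :
    Li 2 (1 - 1/x) + Li 2 (1 - x) + Real.log x ^ 2 / 2 = 0 := by
  obtain ⟨hx0, hx1⟩ := hx
  have hxpos : 0 < x := by linarith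
  have key := constant_of_has_deriv_right_zero
    (f := fun y : ℝ => Li 2 (1 - 1/y) + Li 2 (1 - y) + Real.log y ^ 2 / 2) (a := x) (b := 1)
    ?_ ?_ 1 (by constructor <;> linarith)
  · have h1 : Li 2 (1 - 1/1) + Li 2 (1 - 1) + Real.log 1 ^ 2 / 2 = 0 := by
      norm_num [Li_zero]
    rw [h1] at key
    linarith [key]
  · -- continuity
    apply ContinuousOn.add
    apply ContinuousOn.add
    · apply (continuousOn_Li le_rfl).comp
      · apply ContinuousOn.sub continuousOn_const
        apply ContinuousOn.div continuousOn_const continuousOn_id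
        intro y hy
        simp only [id]
        intro h
        subst h
        simp only [Set.mem_Icc] at hy
        linarith [hy.1]
      · intro y hy
        simp only [Set.mem_Icc] at hy ⊢
        have hy0 : 0 < y := by linarith [hy.1]
        have h1 : 1/y ≤ 1/x := by
          apply div_le_div_of_nonneg_left (by norm_num) hxpos hy.1
        have h2 : 1/x < 2 := by
          rw [div_lt_iff₀ hxpos]; linarith
        have h3 : (1:ℝ) ≤ 1/y := by
          rw [le_div_iff₀ hy0]; linarith [hy.2]
        constructor <;> linarith
    · apply (continuousOn_Li le_rfl).comp ((continuous_const.sub continuous_id).continuousOn)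
      intro y hy
      simp only [Set.mem_Icc] at hy ⊢
      simp only [Pi.sub_apply, id]
      constructor <;> linarith [hy.1, hy.2]
    · apply ContinuousOn.div_const
      apply ContinuousOn.pow
      apply Real.continuousOn_log.mono
      intro y hy
      simp only [Set.mem_Icc] at hy
      simp only [Set.mem_compl_iff, Set.mem_singleton_iff]
      intro h; subst h; linarith [hy.1]
  · -- derivative zero
    intro y hy
    obtain ⟨hy1, hy2⟩ := hy
    have hy0 : 0 < y := by linarith
    have hyh : 1/2 < y := by linarith
    have h1y0 : 0 < 1 - y := by linarith
    have h1yabs : |1 - y| < 1 := by rw [abs_of_pos h1y0]; linarith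
    have hinv1 : (1:ℝ) < 1/y := by rw [lt_div_iff₀ hy0]; linarith
    have hinv2 : 1/y < 2 := by rw [div_lt_iff₀ hy0]; linarith
    have hu0 : 1 - 1/y < 0 := by linarith
    have huabs : |1 - 1/y| < 1 := by rw [abs_of_neg hu0]; linarith
    have hin : HasDerivAt (fun z : ℝ => 1 - z) (-1) y := by
      simpa using (hasDerivAt_id y).const_sub 1
    have hinv : HasDerivAt (fun z : ℝ => 1 - 1/z) ((y^2)⁻¹) y := by
      have := (hasDerivAt_inv (ne_of_gt hy0)).const_sub 1
      simpa [one_div] using this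
    have h3 : HasDerivAt (fun z : ℝ => Li 2 (1 - 1/z))
        ((-Real.log (1 - (1 - 1/y)) / (1 - 1/y)) * (y^2)⁻¹) y :=
      by have := (hasDerivAt_Li2 (ne_of_lt hu0) huabs).comp y hinv; exact this
    have h2 : HasDerivAt (fun z : ℝ => Li 2 (1 - z))
        ((-Real.log (1 - (1 - y)) / (1 - y)) * (-1)) y :=
      (hasDerivAt_Li2 (ne_of_gt h1y0) h1yabs).comp y hin
    rw [show (1 : ℝ) - (1 - y) = y by ring] at h2
    rw [show (1 : ℝ) - (1 - 1/y) = 1/y by ring] at h3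
    have hlog : HasDerivAt (fun z : ℝ => Real.log z ^ 2 / 2)
        ((2 * Real.log y ^ 1 * y⁻¹) / 2) y :=
      ((Real.hasDerivAt_log (ne_of_gt hy0)).pow 2).div_const 2
    have htot := (h3.add h2).add hlog
    have heq : -Real.log (1/y) / (1 - 1/y) * (y ^ 2)⁻¹ + -Real.log y / (1 - y) * (-1) +
        2 * Real.log y ^ 1 * y⁻¹ / 2 = 0 := by
      rw [one_div, Real.log_inv, show 1 - y⁻¹ = (y-1)/y by field_simp]
      have hy1ne : y - 1 ≠ 0 := by intro h; linarith
      have h1yne : (1:ℝ) - y ≠ 0 := ne_of_gt h1y0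
      field_simp
      ring
    rw [heq] at htot
    exact htot.hasDerivWithinAt

lemma li3_identity {x : ℝ} (hx : x ∈ Ioo (1/2:ℝ) 1) :
    Li 3 x + Li 3 (1 - x) + Li 3 (1 - 1/x) =
      Li 3 1 + Real.log x ^ 3 / 6 + π ^ 2 / 6 * Real.log x
        - Real.log x ^ 2 * Real.log (1 - x) / 2 := by
  obtain ⟨hx0, hx1⟩ := hx
  have hxpos : 0 < x := by linarith
  have key := constant_of_has_deriv_right_zero
    (f := fun y : ℝ => Li 3 y + Li 3 (1 - y) + Li 3 (1 - 1/y) -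
      (Real.log y ^ 3 / 6 + π ^ 2 / 6 * Real.log y - Real.log y ^ 2 * Real.log (1 - y) / 2))
    (a := x) (b := 1) ?_ ?_ 1 (by constructor <;> linarith)
  · have h1 : Li 3 1 + Li 3 (1 - 1) + Li 3 (1 - 1/1) -
        (Real.log 1 ^ 3 / 6 + π ^ 2 / 6 * Real.log 1 - Real.log 1 ^ 2 * Real.log (1 - 1) / 2) =
        Li 3 1 := by
      norm_num [Li_zero]
    rw [h1] at key
    linarith [key]
  · -- continuity
    apply ContinuousOn.sub
    · apply ContinuousOn.add
      apply ContinuousOn.add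
      · exact (continuousOn_Li (by norm_num)).mono (Icc_subset_Icc (by linarith) le_rfl)
      · apply (continuousOn_Li (by norm_num)).comp ((continuous_const.sub continuous_id).continuousOn)
        intro y hy
        simp only [Set.mem_Icc] at hy ⊢
        simp only [Pi.sub_apply, id]
        constructor <;> linarith [hy.1, hy.2]
      · apply (continuousOn_Li (m := 3) (by norm_num)).comp
        · apply ContinuousOn.sub continuousOn_const
          apply ContinuousOn.div continuousOn_const continuousOn_id
          intro y hy
          simp only [id]
          intro h
          subst h
          simp only [Set.mem_Icc] at hy
          linarith [hy.1]
        · intro y hy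
          simp only [Set.mem_Icc] at hy ⊢
          have hy0 : 0 < y := by linarith [hy.1]
          have h1 : 1/y ≤ 1/x := div_le_div_of_nonneg_left (by norm_num) hxpos hy.1
          have h2 : 1/x < 2 := by rw [div_lt_iff₀ hxpos]; linarith
          have h3 : (1:ℝ) ≤ 1/y := by rw [le_div_iff₀ hy0]; linarith [hy.2]
          constructor <;> linarith
    · have hlogcont : ContinuousOn Real.log (Icc x 1) := by
        apply Real.continuousOn_log.mono
        intro y hy
        simp only [Set.mem_Icc] at hy
        simp only [Set.mem_compl_iff, Set.mem_singleton_iff]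
        intro h; subst h; linarith [hy.1]
      apply ContinuousOn.sub
      · exact (((hlogcont.pow 3).div_const 6).add (hlogcont.const_smul (π^2/6) |>.congr (fun y _ => by simp [smul_eq_mul])))
      · have := continuousOn_log_mul_log hxpos 1
        exact this.div_const 2
  · -- derivative zero
    intro y hy
    obtain ⟨hy1, hy2⟩ := hy
    have hy0 : 0 < y := by linarith
    have hyh : 1/2 < y := by linarith
    have hyabs : |y| < 1 := by rw [abs_of_pos hy0]; exact hy2
    have h1y0 : 0 < 1 - y := by linarith
    have h1yabs : |1 - y| < 1 := by rw [abs_of_pos h1y0]; linarith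
    have hinv1 : (1:ℝ) < 1/y := by rw [lt_div_iff₀ hy0]; linarith
    have hinv2 : 1/y < 2 := by rw [div_lt_iff₀ hy0]; linarith
    have hu0 : 1 - 1/y < 0 := by linarith
    have huabs : |1 - 1/y| < 1 := by rw [abs_of_neg hu0]; linarith
    have hin : HasDerivAt (fun z : ℝ => 1 - z) (-1) y := by
      simpa using (hasDerivAt_id y).const_sub 1
    have hinv : HasDerivAt (fun z : ℝ => 1 - 1/z) ((y^2)⁻¹) y := by
      have := (hasDerivAt_inv (ne_of_gt hy0)).const_sub 1
      simpa [one_div] using this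
    have hA : HasDerivAt (Li 3) (Li 2 y / y) y := hasDerivAt_Li3 (ne_of_gt hy0) hyabs
    have hB : HasDerivAt (fun z : ℝ => Li 3 (1 - z)) ((Li 2 (1 - y) / (1 - y)) * (-1)) y :=
      (hasDerivAt_Li3 (ne_of_gt h1y0) h1yabs).comp y hin
    have hC : HasDerivAt (fun z : ℝ => Li 3 (1 - 1/z))
        ((Li 2 (1 - 1/y) / (1 - 1/y)) * (y^2)⁻¹) y :=
      by have := (hasDerivAt_Li3 (ne_of_lt hu0) huabs).comp y hinv; exact this
    have hlog : HasDerivAt Real.log y⁻¹ y := Real.hasDerivAt_log (ne_of_gt hy0)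
    have hlog2 : HasDerivAt (fun z : ℝ => Real.log (1 - z)) ((1 - y)⁻¹ * (-1)) y :=
      (Real.hasDerivAt_log (ne_of_gt h1y0)).comp y hin
    have hD : HasDerivAt (fun z : ℝ => Real.log z ^ 3 / 6)
        ((3 * Real.log y ^ 2 * y⁻¹) / 6) y := (hlog.pow 3).div_const 6
    have hE : HasDerivAt (fun z : ℝ => π ^ 2 / 6 * Real.log z) (π ^ 2 / 6 * y⁻¹) y :=
      hlog.const_mul (π ^ 2 / 6)
    have hF : HasDerivAt (fun z : ℝ => Real.log z ^ 2 * Real.log (1 - z) / 2)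
        (((2 * Real.log y ^ 1 * y⁻¹) * Real.log (1 - y) +
          Real.log y ^ 2 * ((1 - y)⁻¹ * (-1))) / 2) y :=
      (((hlog.pow 2).mul hlog2)).div_const 2
    have htot := ((hA.add hB).add hC).sub ((hD.add hE).sub hF)
    have hrefl := li2_reflection (x := y) ⟨hy0, hy2⟩
    have hland := li2_landen (x := y) ⟨hyh, hy2⟩
    have hBval : Li 2 (1 - y) = π ^ 2 / 6 - Real.log y * Real.log (1 - y) - Li 2 y := by
      linarith
    have hCval : Li 2 (1 - 1/y) =
        -(π ^ 2 / 6 - Real.log y * Real.log (1 - y) - Li 2 y) - Real.log y ^ 2 / 2 := by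
      rw [hBval] at hland
      linarith
    have heq : Li 2 y / y + Li 2 (1 - y) / (1 - y) * (-1) +
        Li 2 (1 - 1/y) / (1 - 1/y) * (y ^ 2)⁻¹ -
        (3 * Real.log y ^ 2 * y⁻¹ / 6 + π ^ 2 / 6 * y⁻¹ -
          (2 * Real.log y ^ 1 * y⁻¹ * Real.log (1 - y) +
            Real.log y ^ 2 * ((1 - y)⁻¹ * (-1))) / 2) = 0 := by
      rw [hBval, hCval, show 1 - 1/y = (y-1)/y by field_simp]
      have hy1ne : y - 1 ≠ 0 := by intro h; linarith
      have h1yne : (1:ℝ) - y ≠ 0 := ne_of_gt h1y0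
      field_simp
      ring
    rw [heq] at htot
    exact htot.hasDerivWithinAt

set_option maxHeartbeats 1000000 in
lemma li3_duplication {x : ℝ} (hx : |x| < 1) :
    Li 3 x + Li 3 (-x) = (1/4) * Li 3 (x^2) := by
  have hs1 : HasSum (fun n : ℕ => x^(n+1)/((n:ℝ)+1)^3) (Li 3 x) :=
    (summable_li hx.le (by norm_num)).hasSum
  have hs2 : HasSum (fun n : ℕ => (-x)^(n+1)/((n:ℝ)+1)^3) (Li 3 (-x)) :=
    (summable_li (by rw [abs_neg]; exact hx.le) (by norm_num)).hasSum
  have hadd := hs1.add hs2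
  have hx2 : |x^2| ≤ 1 := by
    rw [abs_pow]
    nlinarith [abs_nonneg x]
  have hs3 : HasSum (fun k : ℕ => (x^2)^(k+1)/((k:ℝ)+1)^3) (Li 3 (x^2)) :=
    (summable_li hx2 (by norm_num)).hasSum
  have ho : HasSum (fun k : ℕ =>
      (fun n : ℕ => x^(n+1)/((n:ℝ)+1)^3 + (-x)^(n+1)/((n:ℝ)+1)^3) (2*k+1))
      ((1/4) * Li 3 (x^2)) := by
    have h := hs3.mul_left (1/4)
    have heq : (fun k : ℕ => 1/4 * ((x^2)^(k+1)/((k:ℝ)+1)^3)) = fun k : ℕ =>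
        (fun n : ℕ => x^(n+1)/((n:ℝ)+1)^3 + (-x)^(n+1)/((n:ℝ)+1)^3) (2*k+1) := by
      funext k
      simp only
      have h1 : (-x)^(2*k+1+1) = x^(2*k+1+1) := by
        rw [show 2*k+1+1 = 2*(k+1) by ring]
        rw [pow_mul, pow_mul, neg_pow, neg_one_sq, one_mul]
      have h2 : x^(2*k+1+1) = (x^2)^(k+1) := by
        rw [← pow_mul]
        ring_nf
      have h3 : ((2*k+1 : ℕ) : ℝ) + 1 = 2 * ((k:ℝ)+1) := by push_cast; ring
      rw [h1, h2, h3]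
      have hk : ((k:ℝ)+1) ≠ 0 := by positivity
      rw [mul_pow]
      field_simp
      ring
    rwa [heq] at h
  have he : HasSum (fun k : ℕ =>
      (fun n : ℕ => x^(n+1)/((n:ℝ)+1)^3 + (-x)^(n+1)/((n:ℝ)+1)^3) (2*k))
      0 := by
    have heq : (fun k : ℕ =>
        (fun n : ℕ => x^(n+1)/((n:ℝ)+1)^3 + (-x)^(n+1)/((n:ℝ)+1)^3) (2*k)) =
        fun _ : ℕ => (0:ℝ) := by
      funext k
      simp only
      have h1 : (-x)^(2*k+1) = -(x^(2*k+1)) := Odd.neg_pow ⟨k, by ring⟩ x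
      rw [h1]
      ring
    rw [heq]
    exact hasSum_zero
  have key : HasSum (fun n : ℕ => x^(n+1)/((n:ℝ)+1)^3 + (-x)^(n+1)/((n:ℝ)+1)^3)
      (0 + 1/4 * Li 3 (x^2)) :=
    HasSum.even_add_odd (f := fun n : ℕ => x^(n+1)/((n:ℝ)+1)^3 + (-x)^(n+1)/((n:ℝ)+1)^3) he ho
  rw [zero_add] at key
  exact hadd.unique key

theorem stmt9' :
    Li 3 ((((Real.sqrt 5 - 1) / 2)) ^ 2) =
      4 / 5 * (∑' n : ℕ, 1 / ((n : ℝ) + 1) ^ 3) - 2 / 3 * Real.log (((Real.sqrt 5 - 1) / 2)) ^ 3 +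
        2 / 15 * π ^ 2 * Real.log (((Real.sqrt 5 - 1) / 2)) := by
  set φ : ℝ := (Real.sqrt 5 - 1) / 2 with hφdef
  have h5 : Real.sqrt 5 ^ 2 = 5 := Real.sq_sqrt (by norm_num)
  have hs0 : 0 ≤ Real.sqrt 5 := Real.sqrt_nonneg 5
  have h2lt : 2 < Real.sqrt 5 := by nlinarith
  have h3gt : Real.sqrt 5 < 3 := by nlinarith
  have hφmem : φ ∈ Ioo (1/2 : ℝ) 1 := by
    constructor <;> (rw [hφdef]; linarith)
  have hφ0 : 0 < φ := by linarith [hφmem.1]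
  have hφ1 : φ < 1 := hφmem.2
  have hsq : 1 - φ = φ^2 := by
    rw [hφdef]
    ring_nf
    nlinarith
  have hne : φ ≠ 0 := ne_of_gt hφ0
  have hinv : 1 - 1/φ = -φ := by
    have hmul : φ * (φ + 1) = 1 := by nlinarith
    field_simp
    nlinarith
  have hid := li3_identity hφmem
  rw [hsq, hinv] at hid
  have habs : |φ| < 1 := by rw [abs_of_pos hφ0]; exact hφ1
  have hdup := li3_duplication habs
  have hlog : Real.log (1 - φ) = 2 * Real.log φ := by
    rw [hsq, ← Real.rpow_natCast φ 2, Real.log_rpow hφ0]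
    norm_num
  rw [hsq] at hlog
  rw [hlog] at hid
  have hzeta : Li 3 1 = ∑' n : ℕ, 1 / ((n : ℝ) + 1) ^ 3 := Li_one_3
  rw [hzeta] at hid
  linarith


theorem stmt9 :
    Li 3 ((((Real.sqrt 5 - 1) / 2)) ^ 2) =
      4 / 5 * zeta3 - 2 / 3 * Real.log (((Real.sqrt 5 - 1) / 2)) ^ 3 +
        2 / 15 * π ^ 2 * Real.log (((Real.sqrt 5 - 1) / 2)) := by
  have h := stmt9'
  unfold zeta3
  exact h
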